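/- Let F_q be a finite field and let G be an n × k Cauchy matrix over F_q. Let γ ≥ 1 be an integer with 2γ ≤ n and 2γ < k. Then any γ-sparse vector z ∈ F_q^k is uniquely determined by any 2γ coordinates of Gz: if z, z' ∈ F_q^k are both γ-sparse, R is a set of 2γ row indices, and (Gz)_i = (Gz')_i for all i ∈ R, then z = z'. -/

import Mathlib

open Polynomial Finset

/-- For a Cauchy matrix `G` over a finite field with `2γ ≤ n` and `2γ < k`, any `γ`-sparse
vector `z` is uniquely determined by any `2γ` coordinates of `Gz`. -/
theorem stmt_6 {F : Type*} [Field F] [Fintype F] [DecidableEq F]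
    {n k γ : ℕ} (hγ : 1 ≤ γ) (hn : 2 * γ ≤ n) (hk : 2 * γ < k)
    (h : Fin n → F) (f : Fin k → F)
    (hh : Function.Injective h) (hf : Function.Injective f)
    (hhf : ∀ i j, h i ≠ f j)
    (G : Matrix (Fin n) (Fin k) F) (hG : ∀ i j, G i j = (h i - f j)⁻¹)
    (z z' : Fin k → F) (hz : hammingNorm z ≤ γ) (hz' : hammingNorm z' ≤ γ)
    (R : Finset (Fin n)) (hR : R.card = 2 * γ)
    (hagree : ∀ i ∈ R, G.mulVec z i = G.mulVec z' i) : z = z' := by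
  set w : Fin k → F := z - z' with hw
  -- support of w
  set S : Finset (Fin k) := {j | w j ≠ 0} with hS
  have hwnorm : S.card ≤ 2 * γ := by
    have : hammingNorm w = hammingDist z z' := by
      rw [hw]; unfold hammingNorm hammingDist; simp [sub_ne_zero]
    have htri : hammingDist z z' ≤ hammingNorm z + hammingNorm z' := by
      calc hammingDist z z' ≤ hammingDist z 0 + hammingDist 0 z' := hammingDist_triangle _ _ _
        _ = hammingNorm z + hammingNorm z' := by
            rw [hammingDist_zero_right, hammingDist_comm, hammingDist_zero_right]
    have : hammingNorm w ≤ 2 * γ := by omega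
    simpa [hammingNorm, hS] using this
  -- w is in the "kernel" on rows of R
  have hker : ∀ i ∈ R, ∑ j ∈ S, (h i - f j)⁻¹ * w j = 0 := by
    intro i hi
    have h0 : G.mulVec w i = 0 := by
      have : G.mulVec z i - G.mulVec z' i = 0 := by rw [hagree i hi, sub_self]
      simpa [hw, Matrix.mulVec, dotProduct, mul_sub, Finset.sum_sub_distrib] using this
    have : ∑ j, (h i - f j)⁻¹ * w j = 0 := by
      rw [Matrix.mulVec, dotProduct] at h0
      simp only [hG] at h0
      exact h0
    rw [← this]
    refine Finset.sum_subset (Finset.subset_univ S) (fun j _ hj => ?_)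
    have hwj : w j = 0 := by
      by_contra hc
      exact hj (by simpa [hS] using hc)
    simp [hwj]
  -- interpolating polynomial
  set P : F[X] := ∑ j ∈ S, C (w j) * ∏ l ∈ S.erase j, (X - C (f l)) with hP
  have hdeg : P.natDegree < 2 * γ := by
    have : P.natDegree ≤ 2 * γ - 1 := by
      refine Polynomial.natDegree_sum_le_of_forall_le _ _ (fun j hj => ?_)
      calc (C (w j) * ∏ l ∈ S.erase j, (X - C (f l))).natDegree
          ≤ (C (w j)).natDegree + (∏ l ∈ S.erase j, (X - C (f l))).natDegree :=
            Polynomial.natDegree_mul_le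
        _ ≤ 0 + (S.erase j).card := by
            gcongr
            · simp
            · refine le_trans (Polynomial.natDegree_prod_le _ _) ?_
              refine le_trans (Finset.sum_le_card_nsmul _ _ 1 (fun l _ => ?_)) (by simp)
              exact Polynomial.natDegree_X_sub_C_le _
        _ ≤ 2 * γ - 1 := by
            have := Finset.card_erase_of_mem hj
            omega
    omega
  -- P vanishes at all h i, i ∈ R
  have heval : ∀ i ∈ R, P.eval (h i) = 0 := by
    intro i hi
    have key : ∀ j ∈ S, (C (w j) * ∏ l ∈ S.erase j, (X - C (f l))).eval (h i)
        = (∏ l ∈ S, (h i - f l)) * ((h i - f j)⁻¹ * w j) := by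
      intro j hj
      have hprod : (h i - f j) * ∏ l ∈ S.erase j, (h i - f l) = ∏ l ∈ S, (h i - f l) :=
        Finset.mul_prod_erase S (fun l => h i - f l) hj
      have hne : h i - f j ≠ 0 := sub_ne_zero.mpr (hhf i j)
      field_simp [Polynomial.eval_prod, ← hprod]
      simp only [Polynomial.eval_mul, Polynomial.eval_C, Polynomial.eval_prod, Polynomial.eval_sub,
        Polynomial.eval_X, ← hprod]
      ring
    rw [hP, Polynomial.eval_finset_sum, Finset.sum_congr rfl key, ← Finset.mul_sum,
      hker i hi, mul_zero]
  have hP0 : P = 0 := by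
    refine Polynomial.eq_zero_of_natDegree_lt_card_of_eval_eq_zero' P (R.image h) ?_ ?_
    · intro x hx
      obtain ⟨i, hi, rfl⟩ := Finset.mem_image.mp hx
      exact heval i hi
    · rwa [Finset.card_image_of_injective _ hh, hR]
  -- conclude each w j = 0
  have hwz : ∀ j, w j = 0 := by
    intro j
    by_contra hc
    have hjS : j ∈ S := by simpa [hS] using hc
    have : P.eval (f j) = w j * ∏ l ∈ S.erase j, (f j - f l) := by
      rw [hP, Polynomial.eval_finset_sum]
      rw [Finset.sum_eq_single j]
      · simp [Polynomial.eval_prod]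
      · intro b hb hbj
        have : j ∈ S.erase b := Finset.mem_erase.mpr ⟨(Ne.symm hbj), hjS⟩
        rw [Polynomial.eval_mul, Polynomial.eval_prod, Finset.prod_eq_zero this (by simp),
          mul_zero]
      · intro hj; exact absurd hjS hj
    rw [hP0] at this
    simp only [Polynomial.eval_zero] at this
    have hne : ∏ l ∈ S.erase j, (f j - f l) ≠ 0 := by
      refine Finset.prod_ne_zero_iff.mpr (fun l hl => sub_ne_zero.mpr ?_)
      intro hfe
      exact (Finset.mem_erase.mp hl).1 (hf hfe).symm
    exact hc (by
      have := this.symm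
      rcases mul_eq_zero.mp this with h1 | h2
      · exact h1
      · exact absurd h2 hne)
  funext j
  have := hwz j
  simpa [hw, sub_eq_zero] using this
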